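/- Let α > 1 and let (p_n) be a sequence of primes satisfying p_n^α ≤ p_{n+1} < (p_n + 1)^α - 1 for all n ≥ 0. Define a_n = p_n^{α^{-n}} and b_n = (p_n+1)^{α^{-n}}. Then (a_n) is nondecreasing, (b_n) is strictly decreasing, a_n < b_n for all n, and A := lim_{n→∞} a_n exists and satisfies ⌊A^{α^n}⌋ = p_n for every n. -/

import Mathlib

/-- For `α > 1` and primes `p_n` with `p_n^α ≤ p_{n+1} < (p_n+1)^α - 1`, the sequences
`a_n = p_n^{α^{-n}}` and `b_n = (p_n+1)^{α^{-n}}` satisfy: `a` is nondecreasing, `b` is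
strictly decreasing, `a_n < b_n`, and `A = lim a_n` exists with `⌊A^{α^n}⌋ = p_n` for
all `n`. -/
theorem stmt8 (α : ℝ) (hα : 1 < α) (p : ℕ → ℕ) (hp : ∀ n, (p n).Prime)
    (hrec : ∀ n, (p n : ℝ) ^ α ≤ (p (n + 1) : ℝ) ∧
      (p (n + 1) : ℝ) < ((p n : ℝ) + 1) ^ α - 1) :
    Monotone (fun n : ℕ => (p n : ℝ) ^ ((α ^ n)⁻¹)) ∧
    StrictAnti (fun n : ℕ => ((p n : ℝ) + 1) ^ ((α ^ n)⁻¹)) ∧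
    (∀ n : ℕ, (p n : ℝ) ^ ((α ^ n)⁻¹) < ((p n : ℝ) + 1) ^ ((α ^ n)⁻¹)) ∧
    ∃ A : ℝ, Filter.Tendsto (fun n : ℕ => (p n : ℝ) ^ ((α ^ n)⁻¹))
        Filter.atTop (nhds A) ∧
      ∀ n : ℕ, ⌊A ^ (α ^ n)⌋₊ = p n := by
  have hα0 : (0:ℝ) < α := lt_trans one_pos hα
  have hαn : ∀ n : ℕ, (0:ℝ) < α ^ n := fun n => pow_pos hα0 n
  have hpn : ∀ n, (0:ℝ) < (p n : ℝ) := fun n => by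
    exact_mod_cast (hp n).pos
  set a : ℕ → ℝ := fun n : ℕ => (p n : ℝ) ^ ((α ^ n)⁻¹) with ha
  set b : ℕ → ℝ := fun n : ℕ => ((p n : ℝ) + 1) ^ ((α ^ n)⁻¹) with hb
  have hexp : ∀ n : ℕ, α * (α ^ (n+1))⁻¹ = (α ^ n)⁻¹ := by
    intro n
    rw [pow_succ]
    field_simp
  have hmono : Monotone a := by
    apply monotone_nat_of_le_succ
    intro n
    have h1 : ((p n : ℝ) ^ α) ^ ((α ^ (n+1))⁻¹) ≤ (p (n+1) : ℝ) ^ ((α ^ (n+1))⁻¹) :=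
      Real.rpow_le_rpow (Real.rpow_nonneg (hpn n).le α) (hrec n).1 (inv_nonneg.2 (hαn _).le)
    calc a n = ((p n : ℝ) ^ α) ^ ((α ^ (n+1))⁻¹) := by
          rw [← Real.rpow_mul (hpn n).le, hexp n]
      _ ≤ a (n+1) := h1
  have hanti : StrictAnti b := by
    apply strictAnti_nat_of_succ_lt
    intro n
    have hlt : (p (n+1) : ℝ) + 1 < ((p n : ℝ) + 1) ^ α := by
      linarith [(hrec n).2]
    have h1 : ((p (n+1) : ℝ) + 1) ^ ((α ^ (n+1))⁻¹) < (((p n : ℝ) + 1) ^ α) ^ ((α ^ (n+1))⁻¹) :=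
      Real.rpow_lt_rpow (by positivity) hlt (inv_pos.2 (hαn _))
    calc b (n+1) < (((p n : ℝ) + 1) ^ α) ^ ((α ^ (n+1))⁻¹) := h1
      _ = b n := by
          rw [← Real.rpow_mul (by positivity), hexp n]
  have hab : ∀ n : ℕ, a n < b n := fun n =>
    Real.rpow_lt_rpow (hpn n).le (by linarith [hpn n]) (inv_pos.2 (hαn n))
  have hbdd : BddAbove (Set.range a) := by
    refine ⟨b 0, ?_⟩
    rintro x ⟨n, rfl⟩
    exact (hab n).le.trans (hanti.antitone (Nat.zero_le n))
  refine ⟨hmono, hanti, hab, ⨆ n, a n, tendsto_atTop_ciSup hmono hbdd, ?_⟩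
  set A := ⨆ n, a n with hA
  have haA : ∀ n, a n ≤ A := fun n => le_ciSup hbdd n
  have hAb : ∀ n, A < b n := by
    intro n
    have h1 : A ≤ b (n+1) := by
      apply ciSup_le
      intro m
      calc a m ≤ a (max m (n+1)) := hmono (le_max_left _ _)
        _ ≤ b (max m (n+1)) := (hab _).le
        _ ≤ b (n+1) := hanti.antitone (le_max_right _ _)
    exact h1.trans_lt (hanti (Nat.lt_succ_self n))
  have hA0 : 0 < A := lt_of_lt_of_le (Real.rpow_pos_of_pos (hpn 0) _) (haA 0)
  intro n
  have hapow : a n ^ (α ^ n) = (p n : ℝ) := by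
    rw [show a n = (p n : ℝ) ^ ((α ^ n)⁻¹) from rfl, ← Real.rpow_mul (hpn n).le,
      inv_mul_cancel₀ (hαn n).ne', Real.rpow_one]
  have hbpow : b n ^ (α ^ n) = (p n : ℝ) + 1 := by
    rw [show b n = ((p n : ℝ) + 1) ^ ((α ^ n)⁻¹) from rfl,
      ← Real.rpow_mul (by positivity), inv_mul_cancel₀ (hαn n).ne', Real.rpow_one]
  have key1 : (p n : ℝ) ≤ A ^ (α ^ n) := by
    have := Real.rpow_le_rpow (Real.rpow_pos_of_pos (hpn n) _).le (haA n) (hαn n).le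
    rwa [hapow] at this
  have key2 : A ^ (α ^ n) < (p n : ℝ) + 1 := by
    have := Real.rpow_lt_rpow hA0.le (hAb n) (hαn n)
    rwa [hbpow] at this
  rw [Nat.floor_eq_iff (by positivity)]
  exact ⟨key1, key2⟩
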